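/- Let A be a block matrix [[B, C], [0, D]] with nonnegative blocks. If rank_+(B|C) = rank_+(B), where (B|C) denotes the horizontal concatenation of B and C, then rank_+(A) = rank_+(B) + rank_+(D). -/

import Mathlib

noncomputable def nnRank {α β : Type} [Fintype α] [Fintype β] (A : Matrix α β ℝ) : ℕ :=
  sInf {r : ℕ | ∃ u : Fin r → α → ℝ, ∃ v : Fin r → β → ℝ,
    (∀ t i, 0 ≤ u t i) ∧ (∀ t j, 0 ≤ v t j) ∧ ∀ i j, A i j = ∑ t, u t i * v t j}

lemma nnRank_le' {α β : Type} [Fintype α] [Fintype β] (A : Matrix α β ℝ) (r : ℕ)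
    (u : Fin r → α → ℝ) (v : Fin r → β → ℝ)
    (hu : ∀ t i, 0 ≤ u t i) (hv : ∀ t j, 0 ≤ v t j)
    (hA : ∀ i j, A i j = ∑ t, u t i * v t j) : nnRank A ≤ r :=
  Nat.sInf_le ⟨u, v, hu, hv, hA⟩

lemma nnRank_spec' {α β : Type} [Fintype α] [Fintype β] (A : Matrix α β ℝ)
    (hA : ∀ i j, 0 ≤ A i j) :
    ∃ u : Fin (nnRank A) → α → ℝ, ∃ v : Fin (nnRank A) → β → ℝ,
      (∀ t i, 0 ≤ u t i) ∧ (∀ t j, 0 ≤ v t j) ∧ ∀ i j, A i j = ∑ t, u t i * v t j := by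
  classical
  have hmem : Fintype.card α ∈ {r : ℕ | ∃ u : Fin r → α → ℝ, ∃ v : Fin r → β → ℝ,
      (∀ t i, 0 ≤ u t i) ∧ (∀ t j, 0 ≤ v t j) ∧ ∀ i j, A i j = ∑ t, u t i * v t j} := by
    refine ⟨fun t i => if Fintype.equivFin α i = t then 1 else 0,
      fun t j => A ((Fintype.equivFin α).symm t) j,
      fun t i => by dsimp only; split <;> norm_num, fun t j => hA _ _, fun i j => ?_⟩
    simp [ite_mul]
  exact Nat.sInf_mem (Set.nonempty_of_mem hmem)

theorem stmt_1 {m1 m2 n1 n2 : ℕ}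
    (B : Matrix (Fin m1) (Fin n1) ℝ) (C : Matrix (Fin m1) (Fin n2) ℝ)
    (D : Matrix (Fin m2) (Fin n2) ℝ)
    (hB : ∀ i j, 0 ≤ B i j) (hC : ∀ i j, 0 ≤ C i j) (hD : ∀ i j, 0 ≤ D i j)
    (h : nnRank (Matrix.fromCols B C) = nnRank B) :
    nnRank (Matrix.fromBlocks B C 0 D) = nnRank B + nnRank D := by
  classical
  have hBCpos : ∀ i j, 0 ≤ Matrix.fromCols B C i j := by
    intro i j; cases j with
    | inl j => simpa using hB i j
    | inr j => simpa using hC i j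
  have hApos : ∀ i j, 0 ≤ Matrix.fromBlocks B C 0 D i j := by
    rintro (i | i) (j | j) <;> simp [hB, hC, hD]
  -- upper bound
  obtain ⟨ubc, vbc, hubc, hvbc, hbc⟩ := nnRank_spec' (Matrix.fromCols B C) hBCpos
  obtain ⟨ud, vd, hud, hvd, hd⟩ := nnRank_spec' D hD
  have hle : nnRank (Matrix.fromBlocks B C 0 D)
      ≤ nnRank (Matrix.fromCols B C) + nnRank D := by
    set uw : (Fin (nnRank (Matrix.fromCols B C)) ⊕ Fin (nnRank D)) → (Fin m1 ⊕ Fin m2) → ℝ :=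
      Sum.elim (fun t1 => Sum.elim (ubc t1) 0) (fun t2 => Sum.elim 0 (ud t2)) with huw
    set vw : (Fin (nnRank (Matrix.fromCols B C)) ⊕ Fin (nnRank D)) → (Fin n1 ⊕ Fin n2) → ℝ :=
      Sum.elim vbc (fun t2 => Sum.elim 0 (vd t2)) with hvw
    have huwpos : ∀ s i, 0 ≤ uw s i := by
      rintro (t1 | t2) (i | i) <;> simp [huw] <;> first | exact hubc _ _ | exact hud _ _
    have hvwpos : ∀ s j, 0 ≤ vw s j := by
      rintro (t1 | t2) (j | j) <;> simp [hvw] <;> first | exact hvbc _ _ | exact hvd _ _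
    refine nnRank_le' _ _
      (fun t => uw (finSumFinEquiv.symm t)) (fun t => vw (finSumFinEquiv.symm t))
      (fun t i => huwpos _ _) (fun t j => hvwpos _ _) ?_
    intro i j
    have hsum : ∑ t, uw (finSumFinEquiv.symm t) i * vw (finSumFinEquiv.symm t) j
        = ∑ s, uw s i * vw s j :=
      Equiv.sum_comp finSumFinEquiv.symm (fun s => uw s i * vw s j)
    rw [hsum, Fintype.sum_sum_type]
    rcases i with i | i <;> rcases j with j | j
    · simpa [huw, hvw] using hbc i (Sum.inl j)
    · simpa [huw, hvw] using hbc i (Sum.inr j)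
    · simp [huw, hvw]
    · simpa [huw, hvw] using hd i j
  -- lower bound
  obtain ⟨u, v, hu, hv, hA⟩ := nnRank_spec' (Matrix.fromBlocks B C 0 D) hApos
  have hzero : ∀ t i j, u t (Sum.inr i) * v t (Sum.inl j) = 0 := by
    intro t i j
    have hsum : ∑ t, u t (Sum.inr i) * v t (Sum.inl j) = 0 := by
      have h0 := hA (Sum.inr i) (Sum.inl j)
      simp only [Matrix.fromBlocks_apply₂₁, Matrix.zero_apply] at h0
      exact h0.symm
    exact (Finset.sum_eq_zero_iff_of_nonneg
      (fun t _ => mul_nonneg (hu t _) (hv t _))).mp hsum t (Finset.mem_univ t)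
  set S : Finset (Fin (nnRank (Matrix.fromBlocks B C 0 D))) :=
    Finset.univ.filter (fun t => ∀ i, u t (Sum.inr i) = 0) with hS
  set T : Finset (Fin (nnRank (Matrix.fromBlocks B C 0 D))) :=
    Finset.univ.filter (fun t => ¬ ∀ i, u t (Sum.inr i) = 0) with hT
  have hvanish : ∀ t, t ∉ S → ∀ j, v t (Sum.inl j) = 0 := by
    intro t ht j
    simp only [hS, Finset.mem_filter, Finset.mem_univ, true_and, not_forall] at ht
    obtain ⟨i, hi⟩ := ht
    rcases mul_eq_zero.mp (hzero t i j) with h1 | h2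
    · exact absurd h1 hi
    · exact h2
  have hBle : nnRank B ≤ S.card := by
    refine nnRank_le' _ S.card
      (fun a i => u (S.equivFin.symm a) (Sum.inl i))
      (fun a j => v (S.equivFin.symm a) (Sum.inl j))
      (fun a i => hu _ _) (fun a j => hv _ _) ?_
    intro i j
    have e1 : ∑ a : Fin S.card,
          u (S.equivFin.symm a) (Sum.inl i) * v (S.equivFin.symm a) (Sum.inl j)
        = ∑ x : {t // t ∈ S}, u x.1 (Sum.inl i) * v x.1 (Sum.inl j) :=
      Equiv.sum_comp S.equivFin.symm (fun x : {t // t ∈ S} => u x.1 (Sum.inl i) * v x.1 (Sum.inl j))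
    rw [e1, Finset.sum_coe_sort S (fun t => u t (Sum.inl i) * v t (Sum.inl j)),
      Finset.sum_subset (Finset.subset_univ S)]
    · have h0 := hA (Sum.inl i) (Sum.inl j)
      simp only [Matrix.fromBlocks_apply₁₁] at h0
      exact h0
    · intro t _ ht
      rw [hvanish t ht j, mul_zero]
  have hDle : nnRank D ≤ T.card := by
    refine nnRank_le' _ T.card
      (fun a i => u (T.equivFin.symm a) (Sum.inr i))
      (fun a j => v (T.equivFin.symm a) (Sum.inr j))
      (fun a i => hu _ _) (fun a j => hv _ _) ?_
    intro i j
    have e1 : ∑ a : Fin T.card,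
          u (T.equivFin.symm a) (Sum.inr i) * v (T.equivFin.symm a) (Sum.inr j)
        = ∑ x : {t // t ∈ T}, u x.1 (Sum.inr i) * v x.1 (Sum.inr j) :=
      Equiv.sum_comp T.equivFin.symm (fun x : {t // t ∈ T} => u x.1 (Sum.inr i) * v x.1 (Sum.inr j))
    rw [e1, Finset.sum_coe_sort T (fun t => u t (Sum.inr i) * v t (Sum.inr j)),
      Finset.sum_subset (Finset.subset_univ T)]
    · have h0 := hA (Sum.inr i) (Sum.inr j)
      simp only [Matrix.fromBlocks_apply₂₂] at h0
      exact h0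
    · intro t _ ht
      simp only [hT, Finset.mem_filter, Finset.mem_univ, true_and, not_not] at ht
      rw [ht i, zero_mul]
  have hcard : S.card + T.card = nnRank (Matrix.fromBlocks B C 0 D) := by
    rw [hS, hT]
    rw [Finset.card_filter_add_card_filter_not]
    exact Fintype.card_fin _
  have hge : nnRank B + nnRank D ≤ nnRank (Matrix.fromBlocks B C 0 D) := by
    calc nnRank B + nnRank D ≤ S.card + T.card := add_le_add hBle hDle
      _ = _ := hcard
  have hle' : nnRank (Matrix.fromBlocks B C 0 D) ≤ nnRank B + nnRank D := by
    rw [← h]; exact hle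
  omega
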